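/- Lower bound on L_Σ away from the true partition (Proposition 6.2): Let α ∈ (1/2, 2/3) and ε ∈ (0, (1−α)/2). Let n ≥ 2 with αn an integer, s > 0, y : [n] → {1,2} with |y⁻¹(1)| = αn, and x : [n] → {1,2} such that, with t_{a,b} := |x⁻¹(a) ∩ y⁻¹(b)| and A := t_{1,1} + t_{2,2}, one has εn ≤ A ≤ (1−ε)n (i.e., (t_{1,1},t_{1,2},t_{2,1},t_{2,2}) ∈ B \ B_ε). Then L_Σ(x,y) ≥ C_{α,ε} · n/s², where C_{α,ε} := min{ α(2−3α)ε², (α−1/2)²·[1−(α−1/2)²]·ε·(1+ε)², ε²·(α−1/2)² } > 0 is a constant depending only on α and ε. -/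

import Mathlib

open Finset

noncomputable section

set_option maxHeartbeats 1000000

lemma keyB (β a b : ℝ) (hβ0 : 0 < β) (hβ1 : β < 1/6) (ha : 0 < a)
    (h3 : b ≤ a) (h4 : -a ≤ b) (h5 : a + b ≤ 1 + 2*β) (h6 : a - b ≤ 1 - 2*β)
    (hc : a ≤ 3*b^2) :
    (a - 3*b^2) * (b - 2*β)^2 + b^2 * (1 - a) ≥ 1/576 := by
  rcases le_or_gt b 0 with hbneg | hbpos
  · have hb : b ≤ -(1/3) := by
      by_contra h
      push_neg at h
      nlinarith [mul_nonneg (by linarith : (0:ℝ) ≤ -b) (by linarith : (0:ℝ) ≤ 3*b+1)]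
    nlinarith [mul_nonneg (sub_nonneg.2 (neg_le.1 h4)) (sq_nonneg (b-2*β)),
      mul_nonneg (sq_nonneg b) (by linarith : (0:ℝ) ≤ 1 + 2*b - 2*β),
      mul_nonneg (mul_nonneg (by linarith : (0:ℝ) ≤ -b) (by linarith : (0:ℝ) ≤ -b + 2*β)) (sq_nonneg (b+1/2)),
      mul_nonneg (mul_nonneg (mul_nonneg (by linarith : (0:ℝ) ≤ -b) (by linarith : (0:ℝ) ≤ -b + 2*β)) (by linarith : (0:ℝ) ≤ -3*b - 1)) (by linarith : (0:ℝ) ≤ 1 + 2*b - 2*β),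
      mul_pos (by linarith : (0:ℝ) < -b) (by linarith : (0:ℝ) < -b + 2*β)]
  · have hb : 1/3 ≤ b := by
      by_contra h
      push_neg at h
      nlinarith [mul_pos hbpos (by linarith : (0:ℝ) < 1 - 3*b)]
    rcases le_or_gt (3*b^2 + b) (1 + 2*β) with hc2 | hc3
    · have h1 : (3*b^2 - a) * (b - 2*β)^2 ≤ b*(3*b-1) * ((b-2*β)*b) := by
        nlinarith [mul_nonneg (by linarith : (0:ℝ) ≤ 3*b^2 - a) (by nlinarith : (0:ℝ) ≤ (b-2*β)*b - (b-2*β)^2),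
          mul_nonneg (by linarith : (0:ℝ) ≤ 3*b^2 - b - (3*b^2 - a)) (by nlinarith : (0:ℝ) ≤ (b-2*β)*b)]
      have h2 : b^2 * (1 - a) ≥ b^2 * (1 - 3*b^2) := by nlinarith [sq_nonneg b]
      nlinarith [mul_nonneg (mul_nonneg (sq_nonneg b) (by linarith : (0:ℝ) ≤ 3*b-1)) (by linarith : (0:ℝ) ≤ 1 + 2*β - 3*b^2 - b), sq_nonneg (b-1/2), sq_nonneg b, mul_nonneg (sq_nonneg b) (mul_nonneg (by linarith : (0:ℝ) ≤ 3*b-1) hβ0.le)]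
    · have hbb : b - 2*β ≥ 1/6 := by nlinarith [sq_nonneg (b - 2*β - 1/6)]
      have h1 : (3*b^2 - a) * (b - 2*β)^2 ≤ b*(3*b-1) * ((b-2*β)*b) := by
        nlinarith [mul_nonneg (by linarith : (0:ℝ) ≤ 3*b^2 - a) (by nlinarith : (0:ℝ) ≤ (b-2*β)*b - (b-2*β)^2),
          mul_nonneg (by linarith : (0:ℝ) ≤ 3*b^2 - b - (3*b^2 - a)) (by nlinarith : (0:ℝ) ≤ (b-2*β)*b)]
      have h2 : b^2 * (1 - a) ≥ b^2 * (b - 2*β) := by nlinarith [sq_nonneg b]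
      have hg : b*(2-3*b) + 2*β*(3*b-1) ≥ 1/4 := by
        nlinarith [sq_nonneg (b-1/2), mul_nonneg (by linarith : (0:ℝ) ≤ 3*b-1) (by linarith : (0:ℝ) ≤ 1 + 2*β - 2*b)]
      nlinarith [mul_nonneg (mul_nonneg (by linarith : (0:ℝ) ≤ b) (by linarith : (0:ℝ) ≤ b - 2*β)) (by linarith : (0:ℝ) ≤ b*(2-3*b) + 2*β*(3*b-1) - 1/4),
        mul_nonneg (by linarith : (0:ℝ) ≤ b) (by linarith : (0:ℝ) ≤ b - 2*β)]

lemma keyBeta (β ε a b : ℝ) (hβ0 : 0 < β) (hβ1 : β < 1/6)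
    (hε1 : 0 < ε) (hε3 : ε < 1/4)
    (h1 : ε ≤ a) (h2 : a ≤ 1-ε) (h3 : b ≤ a) (h4 : -a ≤ b)
    (h5 : a + b ≤ 1 + 2*β) (h6 : a - b ≤ 1 - 2*β) :
    (a - 3*b^2) * (b - 2*β)^2 + b^2 * (1 - a) ≥ ε^2 * β^2 := by
  have ha : 0 < a := lt_of_lt_of_le hε1 h1
  rcases le_or_gt a (3*b^2) with hc | hc
  · have hf := keyB β a b hβ0 hβ1 ha h3 h4 h5 h6 hc
    have heb : ε*β < 1/24 := by nlinarith
    have h576 : ε^2*β^2 ≤ 1/576 := by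
      nlinarith [mul_pos hε1 hβ0, mul_nonneg (by linarith : (0:ℝ) ≤ 1/24 - ε*β) (by positivity : (0:ℝ) ≤ 1/24 + ε*β)]
    linarith
  · rcases le_or_gt (b^2) (β^2) with hb | hb
    · have hbu : b ≤ β := by nlinarith [sq_nonneg (b - β)]
      have hbl : -β ≤ b := by nlinarith [sq_nonneg (b + β)]
      have hba : b^2 ≤ β*a := by
        nlinarith [mul_nonneg (by linarith : (0:ℝ) ≤ β - b) (by linarith : (0:ℝ) ≤ a + b),
          mul_nonneg (by linarith : (0:ℝ) ≤ β + b) (by linarith : (0:ℝ) ≤ a - b)]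
      have hq : (b - 2*β)^2 ≥ β^2 := by nlinarith
      have h7 : a - 3*b^2 ≥ a/2 := by nlinarith
      have h8 : b^2 * (1-a) ≥ 0 := mul_nonneg (sq_nonneg b) (by linarith)
      nlinarith [mul_nonneg (by linarith : (0:ℝ) ≤ a - 3*b^2 - a/2) (sq_nonneg (b-2*β)),
        mul_nonneg (by linarith : (0:ℝ) ≤ a/2) (by linarith : (0:ℝ) ≤ (b-2*β)^2 - β^2),
        mul_nonneg (by linarith : (0:ℝ) ≤ a - ε) (sq_nonneg β),
        mul_nonneg (mul_nonneg (sq_nonneg β) hε1.le) (by linarith : (0:ℝ) ≤ 1/2 - ε)]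
    · have h8 : b^2 * (1-a) ≥ β^2 * ε := by nlinarith [mul_pos hβ0 hβ0]
      have h9 : (a - 3*b^2) * (b-2*β)^2 ≥ 0 := mul_nonneg (by linarith) (sq_nonneg _)
      nlinarith [mul_nonneg (mul_nonneg (sq_nonneg β) hε1.le) (by linarith : (0:ℝ) ≤ 1 - ε)]

lemma splitcard {n : ℕ} (x : Fin n → Fin 2) (q : Fin n → Prop) [DecidablePred q] :
    (Finset.univ.filter fun v => x v = 0 ∧ q v).card
      + (Finset.univ.filter fun v => x v = 1 ∧ q v).card
      = (Finset.univ.filter q).card := by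
  have h := Finset.card_filter_add_card_filter_not
    (s := Finset.univ.filter q) (p := fun v => x v = 0)
  rw [Finset.filter_filter, Finset.filter_filter] at h
  have e1 : (Finset.univ.filter fun v => x v = 0 ∧ q v)
      = Finset.univ.filter fun v => q v ∧ x v = 0 := by
    apply Finset.filter_congr; intro v _; constructor <;> exact fun ⟨h1,h2⟩ => ⟨h2,h1⟩
  have e2 : (Finset.univ.filter fun v => x v = 1 ∧ q v)
      = Finset.univ.filter fun v => q v ∧ ¬ x v = 0 := by
    apply Finset.filter_congr; intro v _
    constructor
    · exact fun ⟨h1,h2⟩ => ⟨h2, by rw [h1]; decide⟩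
    · rintro ⟨h1,h2⟩
      refine ⟨?_, h1⟩
      omega
  rw [e1, e2]
  exact h

/-- Overlap counts `t_{a,b} = |x⁻¹(a) ∩ y⁻¹(b)|`.
(The two communities `{1,2}` of the paper are the two elements `0, 1` of `Fin 2`.) -/
def tnum {n : ℕ} (x y : Fin n → Fin 2) (a b : Fin 2) : ℕ :=
  (Finset.univ.filter fun v => x v = a ∧ y v = b).card

/-- Lower bound on `L_Σ` away from the true partition (Proposition 6.2): if
`α ∈ (1/2, 2/3)`, `ε ∈ (0, (1−α)/2)` and the overlap `A = t_{1,1} + t_{2,2}`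
satisfies `εn ≤ A ≤ (1−ε)n` (i.e. the overlap tuple lies in `B \ B_ε`), then
`L_Σ(x,y) = (1/(n³s²))[(nA − 3B²)(B + (1−2α)n)² + nB²(n − A)] ≥ C_{α,ε}·n/s²`,
with `C_{α,ε} = min{α(2−3α)ε², (α−1/2)²(1−(α−1/2)²)ε(1+ε)², ε²(α−1/2)²} > 0`. -/
theorem stmt_16 (α ε : ℝ) (hα : α ∈ Set.Ioo (1 / 2 : ℝ) (2 / 3))
    (hε : ε ∈ Set.Ioo (0 : ℝ) ((1 - α) / 2))
    (n : ℕ) (hn : 2 ≤ n) (s : ℝ) (hs : 0 < s) (hαn : ∃ m : ℕ, (m : ℝ) = α * n)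
    (y : Fin n → Fin 2)
    (hy : ((Finset.univ.filter fun v => y v = 0).card : ℝ) = α * n)
    (x : Fin n → Fin 2)
    (hA₁ : ε * n ≤ (tnum x y 0 0 : ℝ) + (tnum x y 1 1 : ℝ))
    (hA₂ : (tnum x y 0 0 : ℝ) + (tnum x y 1 1 : ℝ) ≤ (1 - ε) * n) :
    0 < min (α * (2 - 3 * α) * ε ^ 2)
        (min ((α - 1 / 2) ^ 2 * (1 - (α - 1 / 2) ^ 2) * ε * (1 + ε) ^ 2)
          (ε ^ 2 * (α - 1 / 2) ^ 2)) ∧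
    (1 / ((n : ℝ) ^ 3 * s ^ 2)) *
        (((n : ℝ) * ((tnum x y 0 0 : ℝ) + (tnum x y 1 1 : ℝ))
            - 3 * ((tnum x y 0 0 : ℝ) - (tnum x y 1 1 : ℝ)) ^ 2) *
          (((tnum x y 0 0 : ℝ) - (tnum x y 1 1 : ℝ)) + (1 - 2 * α) * n) ^ 2
        + (n : ℝ) * ((tnum x y 0 0 : ℝ) - (tnum x y 1 1 : ℝ)) ^ 2 *
          ((n : ℝ) - ((tnum x y 0 0 : ℝ) + (tnum x y 1 1 : ℝ))))
      ≥ min (α * (2 - 3 * α) * ε ^ 2)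
          (min ((α - 1 / 2) ^ 2 * (1 - (α - 1 / 2) ^ 2) * ε * (1 + ε) ^ 2)
            (ε ^ 2 * (α - 1 / 2) ^ 2)) * n / s ^ 2 := by
  obtain ⟨hα1, hα2⟩ := hα
  obtain ⟨hε1, hε2⟩ := hε
  have hβ0 : (0:ℝ) < α - 1/2 := by linarith
  have hβ1 : α - 1/2 < 1/6 := by linarith
  have hε3 : ε < 1/4 := by linarith
  -- positivity of the constant
  have hC3 : (0:ℝ) < ε ^ 2 * (α - 1/2) ^ 2 := by positivity
  have hCpos : 0 < min (α * (2 - 3 * α) * ε ^ 2)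
      (min ((α - 1 / 2) ^ 2 * (1 - (α - 1 / 2) ^ 2) * ε * (1 + ε) ^ 2)
        (ε ^ 2 * (α - 1 / 2) ^ 2)) := by
    apply lt_min
    · have : (0:ℝ) < 2 - 3*α := by linarith
      have : (0:ℝ) < α := by linarith
      positivity
    · apply lt_min
      · have h1 : (0:ℝ) < 1 - (α - 1/2)^2 := by nlinarith
        positivity
      · exact hC3
  refine ⟨hCpos, ?_⟩
  -- counting facts
  have hn0 : (0:ℝ) < n := by positivity
  have hc0 : tnum x y 0 0 + tnum x y 1 0 = (Finset.univ.filter fun v => y v = 0).card :=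
    splitcard x (fun v => y v = 0)
  have hc1 : tnum x y 0 1 + tnum x y 1 1 = (Finset.univ.filter fun v => y v = 1).card :=
    splitcard x (fun v => y v = 1)
  have htot : (Finset.univ.filter fun v => y v = 0).card
      + (Finset.univ.filter fun v => y v = 1).card = n := by
    have h := Finset.card_filter_add_card_filter_not
      (s := (Finset.univ : Finset (Fin n))) (p := fun v => y v = 0)
    have e2 : (Finset.univ.filter fun v => ¬ y v = 0)
        = Finset.univ.filter fun v => y v = 1 := by
      apply Finset.filter_congr; intro v _
      constructor
      · intro h1; omega
      · intro h1; rw [h1]; decide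
    rw [e2] at h
    simpa using h
  -- real overlaps
  set T00 := ((tnum x y 0 0 : ℕ) : ℝ) with hT00
  set T11 := ((tnum x y 1 1 : ℕ) : ℝ) with hT11
  have hT00n : T00 ≤ α * n := by
    rw [← hy]
    rw [hT00]
    exact_mod_cast Nat.le.intro hc0
  have hT11n : T11 ≤ (1 - α) * n := by
    have : ((tnum x y 0 1 : ℕ) : ℝ) + T11 = (1 - α) * n := by
      have h1 : ((tnum x y 0 1 : ℕ) : ℝ) + T11
          = ((Finset.univ.filter fun v => y v = 1).card : ℝ) := by
        rw [hT11]; exact_mod_cast congrArg (Nat.cast : ℕ → ℝ) hc1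
      have h2 : ((Finset.univ.filter fun v => y v = 0).card : ℝ)
          + ((Finset.univ.filter fun v => y v = 1).card : ℝ) = n := by
        exact_mod_cast congrArg (Nat.cast : ℕ → ℝ) htot
      rw [h1]; linarith [hy]
    linarith [(Nat.cast_nonneg (tnum x y 0 1) : (0:ℝ) ≤ ((tnum x y 0 1 : ℕ) : ℝ))]
  have hT000 : 0 ≤ T00 := Nat.cast_nonneg _
  have hT110 : 0 ≤ T11 := Nat.cast_nonneg _
  -- normalized variables
  set a := (T00 + T11) / n with hadef
  set b := (T00 - T11) / n with hbdef
  have ha1 : ε ≤ a := by rw [hadef, le_div_iff₀ hn0]; linarith [hA₁]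
  have ha2 : a ≤ 1 - ε := by rw [hadef, div_le_iff₀ hn0]; linarith [hA₂]
  have hb1 : b ≤ a := by rw [hadef, hbdef]; apply div_le_div_of_nonneg_right <;> linarith
  have hb2 : -a ≤ b := by rw [hadef, hbdef, ← neg_div]; apply div_le_div_of_nonneg_right <;> linarith
  have hab1 : a + b ≤ 1 + 2*(α - 1/2) := by
    rw [hadef, hbdef]
    rw [← add_div, div_le_iff₀ hn0]
    ring_nf
    nlinarith [hT00n]
  have hab2 : a - b ≤ 1 - 2*(α - 1/2) := by
    rw [hadef, hbdef]
    rw [div_sub_div_same, div_le_iff₀ hn0]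
    nlinarith [hT11n]
  have hkey := keyBeta (α - 1/2) ε a b hβ0 hβ1 hε1 hε3 ha1 ha2 hb1 hb2 hab1 hab2
  -- rewrite the big expression
  have hE : ((n : ℝ) * (T00 + T11) - 3 * (T00 - T11) ^ 2) * ((T00 - T11) + (1 - 2 * α) * n) ^ 2
        + (n : ℝ) * (T00 - T11) ^ 2 * ((n : ℝ) - (T00 + T11))
      = (n:ℝ)^4 * ((a - 3*b^2) * (b - 2*(α - 1/2))^2 + b^2 * (1 - a)) := by
    rw [hadef, hbdef]
    field_simp
    ring
  rw [hE]
  have hCle : min (α * (2 - 3 * α) * ε ^ 2)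
      (min ((α - 1 / 2) ^ 2 * (1 - (α - 1 / 2) ^ 2) * ε * (1 + ε) ^ 2)
        (ε ^ 2 * (α - 1 / 2) ^ 2)) ≤ ε ^ 2 * (α - 1/2) ^ 2 :=
    le_trans (min_le_right _ _) (min_le_right _ _)
  have hs2 : (0:ℝ) < s^2 := by positivity
  have hfin : (1 / ((n:ℝ)^3 * s^2)) * ((n:ℝ)^4 * ((a - 3*b^2) * (b - 2*(α - 1/2))^2 + b^2 * (1 - a)))
      = ((a - 3*b^2) * (b - 2*(α - 1/2))^2 + b^2 * (1 - a)) * n / s^2 := by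
    field_simp
  rw [hfin]
  rw [ge_iff_le, div_le_div_iff₀ hs2 hs2]
  nlinarith [hn0, hs2, mul_pos hn0 hs2]
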